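/- arXiv:0808.1430 — 2 statements merged into one kernel-verified Lean document; each statement's English description precedes it below -/
import Mathlib

section
/- Let G be a Garside group of finite type and x, α, γ ∈ G with inf(x^γ) ≤ inf(x^α) and sup(x^γ) ≥ sup(x^α). If α ≼ γ, then α^{(1)} ≼ γ^{(1)}, where α^{(1)} and γ^{(1)} are the transports of α and γ at x. -/
namespace GarsidePaper

/-- A Garside structure of finite type on a group `G`: a positive submonoid `P` with
`P ∩ P⁻¹ = {1}`, a Garside element `Δ ∈ P`, the prefix order `a ≼ b ↔ a⁻¹b ∈ P`
a lattice order (with meet `wedge` and join `vee`), the simple elements `[1,Δ]`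
generating `G` and being finite, `Δ⁻¹PΔ = P`, a finite norm on positive elements,
and the infimum and supremum functions `inf`, `sup` characterised by
`Δ^(inf x) ≼ x ≼ Δ^(sup x)` with `inf x` maximal and `sup x` minimal. -/
structure Garside (G : Type*) [Group G] where
  P : Submonoid G
  Δ : G
  purity : ∀ a : G, a ∈ P → a⁻¹ ∈ P → a = 1
  delta_mem : Δ ∈ P
  wedge : G → G → G
  vee : G → G → G
  wedge_le_left : ∀ a b : G, (wedge a b)⁻¹ * a ∈ P
  wedge_le_right : ∀ a b : G, (wedge a b)⁻¹ * b ∈ P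
  le_wedge : ∀ a b c : G, c⁻¹ * a ∈ P → c⁻¹ * b ∈ P → c⁻¹ * wedge a b ∈ P
  le_vee_left : ∀ a b : G, a⁻¹ * vee a b ∈ P
  le_vee_right : ∀ a b : G, b⁻¹ * vee a b ∈ P
  vee_le : ∀ a b c : G, a⁻¹ * c ∈ P → b⁻¹ * c ∈ P → (vee a b)⁻¹ * c ∈ P
  simples_generate : Subgroup.closure {a : G | a ∈ P ∧ a⁻¹ * Δ ∈ P} = (⊤ : Subgroup G)
  conj_pos : ∀ a : G, a ∈ P → Δ⁻¹ * a * Δ ∈ P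
  norm : G → ℕ
  norm_exists : ∀ x : G, x ∈ P → x ≠ 1 →
    ∃ l : List G, (∀ s ∈ l, s ∈ P ∧ s ≠ 1) ∧ l.prod = x ∧ l.length = norm x
  norm_max : ∀ x : G, x ∈ P → x ≠ 1 →
    ∀ l : List G, (∀ s ∈ l, s ∈ P ∧ s ≠ 1) → l.prod = x → l.length ≤ norm x
  simples_finite : Set.Finite {a : G | a ∈ P ∧ a⁻¹ * Δ ∈ P}
  inf : G → ℤ
  sup : G → ℤ
  inf_le : ∀ x : G, (Δ ^ inf x)⁻¹ * x ∈ P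
  inf_max : ∀ (x : G) (p : ℤ), (Δ ^ p)⁻¹ * x ∈ P → p ≤ inf x
  le_sup : ∀ x : G, x⁻¹ * Δ ^ sup x ∈ P
  sup_min : ∀ (x : G) (q : ℤ), x⁻¹ * Δ ^ q ∈ P → sup x ≤ q

namespace Garside

variable {G : Type*} [Group G]

/-- The prefix order `a ≼ b`. -/
def le (S : Garside G) (a b : G) : Prop := a⁻¹ * b ∈ S.P

/-- The canonical length `ℓ(x) = sup(x) - inf(x)`. -/
def len (S : Garside G) (x : G) : ℤ := S.sup x - S.inf x

/-- The initial factor `ι(x) = (x Δ^(-inf x)) ∧ Δ`. -/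
def iota (S : Garside G) (x : G) : G := S.wedge (x * S.Δ ^ (-S.inf x)) S.Δ

/-- The preferred prefix `𝔭(x) = ι(x) ∧ ι(x⁻¹)`. -/
def pp (S : Garside G) (x : G) : G := S.wedge (S.iota x) (S.iota x⁻¹)

/-- Cyclic sliding `𝔰(x) = 𝔭(x)⁻¹ x 𝔭(x)`. -/
def sl (S : Garside G) (x : G) : G := (S.pp x)⁻¹ * x * S.pp x

/-- The final factor `φ(x) = (Δ^(sup x - 1) ∧ x)⁻¹ x`. -/
def phi (S : Garside G) (x : G) : G := (S.wedge (S.Δ ^ (S.sup x - 1)) x)⁻¹ * x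

/-- Conjugation by `Δ`: `τ(x) = Δ⁻¹ x Δ`. -/
def tau (S : Garside G) (x : G) : G := S.Δ⁻¹ * x * S.Δ

/-- Cycling `c(x) = ι(x)⁻¹ x ι(x)`. -/
def cyc (S : Garside G) (x : G) : G := (S.iota x)⁻¹ * x * S.iota x

/-- Decycling `d(x) = φ(x) x φ(x)⁻¹`. -/
def dec (S : Garside G) (x : G) : G := S.phi x * x * (S.phi x)⁻¹

/-- The transport `α^{(1)} = 𝔭(x)⁻¹ α 𝔭(x^α)` of `α` at `x`. -/
def transport (S : Garside G) (x α : G) : G := (S.pp x)⁻¹ * α * S.pp (α⁻¹ * x * α)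

/-- The iterated transport: `itTransport x i α = α^{(i)}`, the transport of `α^{(i-1)}`
at `𝔰^{i-1}(x)`, with `α^{(0)} = α`. -/
def itTransport (S : Garside G) (x : G) : ℕ → G → G
  | 0, α => α
  | i + 1, α => S.transport ((S.sl)^[i] x) (S.itTransport x i α)

/-- `𝔓_i(x) = 𝔭(x) 𝔭(𝔰(x)) ⋯ 𝔭(𝔰^{i-1}(x))`, with `𝔓₀(x) = 1`. -/
def PP (S : Garside G) (x : G) : ℕ → G
  | 0 => 1
  | i + 1 => S.PP x i * S.pp ((S.sl)^[i] x)

/-- The summit set `SS(x)`. -/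
def SS (S : Garside G) (x : G) : Set G :=
  {y | IsConj x y ∧ ∀ z : G, IsConj x z → S.inf z ≤ S.inf y}

/-- The super summit set `SSS(x)`. -/
def SSS (S : Garside G) (x : G) : Set G :=
  {y | IsConj x y ∧ (∀ z : G, IsConj x z → S.inf z ≤ S.inf y) ∧
       (∀ z : G, IsConj x z → S.sup y ≤ S.sup z)}

/-- The ultra summit set `USS(x)`. -/
def USS (S : Garside G) (x : G) : Set G :=
  {y | y ∈ S.SSS x ∧ ∃ m : ℕ, 1 ≤ m ∧ (S.cyc)^[m] y = y}

/-- The reduced super summit set `RSSS(x)`. -/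
def RSSS (S : Garside G) (x : G) : Set G :=
  {y | IsConj x y ∧ (∃ m : ℕ, 1 ≤ m ∧ (S.cyc)^[m] y = y) ∧
       (∃ n : ℕ, 1 ≤ n ∧ (S.dec)^[n] y = y)}

/-- The set of sliding circuits `SC(x)`. -/
def SC (S : Garside G) (x : G) : Set G :=
  {y | IsConj x y ∧ ∃ m : ℕ, 1 ≤ m ∧ (S.sl)^[m] y = y}

end Garside

namespace Garside

variable {G : Type*} [Group G]

/-- The set of simple elements. -/
def simples (S : Garside G) : Set G := {a : G | a ∈ S.P ∧ a⁻¹ * S.Δ ∈ S.P}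

/-- The monoid generated by the simple elements. -/
def M (S : Garside G) : Submonoid G := Submonoid.closure S.simples

variable (S : Garside G)

lemma simples_subset_P : S.simples ⊆ (S.P : Set G) := fun _ ha => ha.1

lemma M_le_P : S.M ≤ S.P := Submonoid.closure_le.2 S.simples_subset_P

lemma delta_simple : S.Δ ∈ S.simples :=
  ⟨S.delta_mem, by rw [inv_mul_cancel]; exact S.P.one_mem⟩

lemma simple_mem_M {s : G} (hs : s ∈ S.simples) : s ∈ S.M := Submonoid.subset_closure hs

lemma tau_simple {s : G} (hs : s ∈ S.simples) : S.Δ⁻¹ * s * S.Δ ∈ S.simples := by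
  refine ⟨S.conj_pos s hs.1, ?_⟩
  have h := S.conj_pos _ hs.2
  have e : S.Δ⁻¹ * (s⁻¹ * S.Δ) * S.Δ = (S.Δ⁻¹ * s * S.Δ)⁻¹ * S.Δ := by group
  rwa [e] at h

lemma exists_tau_preimage {s : G} (hs : s ∈ S.simples) :
    ∃ t ∈ S.simples, S.Δ⁻¹ * t * S.Δ = s := by
  have hm : Set.MapsTo (fun a => S.Δ⁻¹ * a * S.Δ) S.simples S.simples :=
    fun a ha => S.tau_simple ha
  have hinj : Set.InjOn (fun a => S.Δ⁻¹ * a * S.Δ) S.simples := by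
    intro a _ b _ hab
    simp only at hab
    exact mul_left_cancel (mul_right_cancel hab)
  have hb := (Set.Finite.injOn_iff_bijOn_of_mapsTo S.simples_finite hm).1 hinj
  obtain ⟨t, ht, he⟩ := hb.surjOn hs
  exact ⟨t, ht, he⟩

lemma tau_M {m : G} (hm : m ∈ S.M) : S.Δ⁻¹ * m * S.Δ ∈ S.M := by
  induction hm using Submonoid.closure_induction with
  | mem x hx => exact S.simple_mem_M (S.tau_simple hx)
  | one => rw [mul_one, inv_mul_cancel]; exact S.M.one_mem
  | mul x y hx hy ihx ihy =>
    have e : S.Δ⁻¹ * (x * y) * S.Δ = (S.Δ⁻¹ * x * S.Δ) * (S.Δ⁻¹ * y * S.Δ) := by group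
    rw [e]; exact S.M.mul_mem ihx ihy

lemma tauInv_M {m : G} (hm : m ∈ S.M) : S.Δ * m * S.Δ⁻¹ ∈ S.M := by
  induction hm using Submonoid.closure_induction with
  | mem x hx =>
    obtain ⟨t, ht, he⟩ := S.exists_tau_preimage hx
    have e : S.Δ * x * S.Δ⁻¹ = t := by rw [← he]; group
    rw [e]; exact S.simple_mem_M ht
  | one => rw [mul_one, mul_inv_cancel]; exact S.M.one_mem
  | mul x y hx hy ihx ihy =>
    have e : S.Δ * (x * y) * S.Δ⁻¹ = (S.Δ * x * S.Δ⁻¹) * (S.Δ * y * S.Δ⁻¹) := by group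
    rw [e]; exact S.M.mul_mem ihx ihy

lemma pow_tauInv_M (k : ℕ) {m : G} (hm : m ∈ S.M) : S.Δ ^ k * m * (S.Δ ^ k)⁻¹ ∈ S.M := by
  induction k with
  | zero => simpa using hm
  | succ k ih =>
    have e : S.Δ ^ (k + 1) * m * (S.Δ ^ (k + 1))⁻¹
        = S.Δ * (S.Δ ^ k * m * (S.Δ ^ k)⁻¹) * S.Δ⁻¹ := by
      rw [pow_succ]; group
    rw [e]; exact S.tauInv_M ih

lemma pow_tau_M (k : ℕ) {m : G} (hm : m ∈ S.M) : (S.Δ ^ k)⁻¹ * m * S.Δ ^ k ∈ S.M := by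
  induction k with
  | zero => simpa using hm
  | succ k ih =>
    have e : (S.Δ ^ (k + 1))⁻¹ * m * S.Δ ^ (k + 1)
        = S.Δ⁻¹ * ((S.Δ ^ k)⁻¹ * m * S.Δ ^ k) * S.Δ := by
      rw [pow_succ]; group
    rw [e]; exact S.tau_M ih

lemma zconj_M (n : ℤ) {m : G} (hm : m ∈ S.M) : S.Δ ^ n * m * (S.Δ ^ n)⁻¹ ∈ S.M := by
  obtain ⟨k, rfl | rfl⟩ := n.eq_nat_or_neg
  · rw [zpow_natCast]; exact S.pow_tauInv_M k hm
  · rw [zpow_neg, zpow_natCast, inv_inv]; exact S.pow_tau_M k hm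

lemma simple_div_mem (l : List G) (hl : ∀ s ∈ l, s ∈ S.simples) :
    ∀ v ∈ S.simples, v⁻¹ * l.prod ∈ S.P → v⁻¹ * l.prod ∈ S.M := by
  induction l with
  | nil =>
    intro v hv hp
    rw [List.prod_nil, mul_one] at hp ⊢
    rw [S.purity v hv.1 hp, inv_one]
    exact S.M.one_mem
  | cons s l ih =>
    intro v hv hp
    rw [List.prod_cons] at hp ⊢
    have hs : s ∈ S.simples := hl s List.mem_cons_self
    have hl' : ∀ t ∈ l, t ∈ S.simples := fun t ht => hl t (List.mem_cons_of_mem s ht)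
    have hlp : l.prod ∈ S.P :=
      S.M_le_P (S.M.list_prod_mem fun t ht => S.simple_mem_M (hl' t ht))
    have hvw : v⁻¹ * S.vee v s ∈ S.P := S.le_vee_left v s
    have hsw : s⁻¹ * S.vee v s ∈ S.P := S.le_vee_right v s
    have hwd : (S.vee v s)⁻¹ * S.Δ ∈ S.P := S.vee_le v s S.Δ hv.2 hs.2
    have hwm : (S.vee v s)⁻¹ * (s * l.prod) ∈ S.P := by
      refine S.vee_le v s (s * l.prod) hp ?_
      have e : s⁻¹ * (s * l.prod) = l.prod := by group
      rw [e]; exact hlp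
    have hsw_s : s⁻¹ * S.vee v s ∈ S.simples := by
      refine ⟨hsw, ?_⟩
      have e : (s⁻¹ * S.vee v s)⁻¹ * S.Δ
          = ((S.vee v s)⁻¹ * S.Δ) * (S.Δ⁻¹ * s * S.Δ) := by group
      rw [e]; exact S.P.mul_mem hwd (S.conj_pos s hs.1)
    have hvw_s : v⁻¹ * S.vee v s ∈ S.simples := by
      refine ⟨hvw, ?_⟩
      have e : (v⁻¹ * S.vee v s)⁻¹ * S.Δ
          = ((S.vee v s)⁻¹ * S.Δ) * (S.Δ⁻¹ * v * S.Δ) := by group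
      rw [e]; exact S.P.mul_mem hwd (S.conj_pos v hv.1)
    have hstep : (s⁻¹ * S.vee v s)⁻¹ * l.prod ∈ S.P := by
      have e : (s⁻¹ * S.vee v s)⁻¹ * l.prod = (S.vee v s)⁻¹ * (s * l.prod) := by group
      rw [e]; exact hwm
    have hM := ih hl' (s⁻¹ * S.vee v s) hsw_s hstep
    have e : v⁻¹ * (s * l.prod)
        = (v⁻¹ * S.vee v s) * ((s⁻¹ * S.vee v s)⁻¹ * l.prod) := by group
    rw [e]
    exact S.M.mul_mem (S.simple_mem_M hvw_s) hM

lemma inv_rep {m : G} (hm : m ∈ S.M) : ∃ m' ∈ S.M, ∃ k : ℤ, m⁻¹ = m' * (S.Δ ^ k)⁻¹ := by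
  induction hm using Submonoid.closure_induction with
  | mem x hx =>
    refine ⟨x⁻¹ * S.Δ, ?_, 1, by group⟩
    refine S.simple_mem_M ⟨hx.2, ?_⟩
    have e : (x⁻¹ * S.Δ)⁻¹ * S.Δ = S.Δ⁻¹ * x * S.Δ := by group
    rw [e]; exact S.conj_pos x hx.1
  | one => exact ⟨1, S.M.one_mem, 0, by simp⟩
  | mul x y hx hy ihx ihy =>
    obtain ⟨a, ha, k, hk⟩ := ihx
    obtain ⟨b, hb, j, hj⟩ := ihy
    have hz := S.zconj_M (-j) ha
    rw [zpow_neg, inv_inv] at hz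
    refine ⟨b * ((S.Δ ^ j)⁻¹ * a * S.Δ ^ j), S.M.mul_mem hb hz, j + k, ?_⟩
    rw [mul_inv_rev, hk, hj]
    group

lemma exists_rep (g : G) : ∃ m ∈ S.M, ∃ n : ℤ, g = m * (S.Δ ^ n)⁻¹ := by
  have hg : g ∈ Subgroup.closure S.simples := by
    have e : Subgroup.closure S.simples = ⊤ := S.simples_generate
    rw [e]; trivial
  induction hg using Subgroup.closure_induction with
  | mem x hx => exact ⟨x, S.simple_mem_M hx, 0, by simp⟩
  | one => exact ⟨1, S.M.one_mem, 0, by simp⟩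
  | mul x y hx hy ihx ihy =>
    obtain ⟨a, ha, k, hk⟩ := ihx
    obtain ⟨b, hb, j, hj⟩ := ihy
    refine ⟨a * ((S.Δ ^ k)⁻¹ * b * S.Δ ^ k), ?_, k + j, ?_⟩
    · have hz := S.zconj_M (-k) hb
      rw [zpow_neg, inv_inv] at hz
      exact S.M.mul_mem ha hz
    · rw [hk, hj]; group
  | inv x hx ihx =>
    obtain ⟨a, ha, k, hk⟩ := ihx
    obtain ⟨b, hb, j, hj⟩ := S.inv_rep ha
    refine ⟨S.Δ ^ k * b * (S.Δ ^ k)⁻¹, S.zconj_M k hb, j - k, ?_⟩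
    rw [hk, mul_inv_rev, inv_inv, hj]
    group

lemma aux_P_le_M : ∀ k : ℕ, ∀ a ∈ S.P, ∀ m ∈ S.M, a * S.Δ ^ k = m → a ∈ S.M := by
  intro k
  induction k with
  | zero =>
    intro a _ m hm he
    rw [pow_zero, mul_one] at he
    rwa [he]
  | succ k ih =>
    intro a ha m hm he
    have hdm : S.Δ⁻¹ * m ∈ S.P := by
      rw [← he]
      have e : S.Δ⁻¹ * (a * S.Δ ^ (k + 1)) = (S.Δ⁻¹ * a * S.Δ) * S.Δ ^ k := by
        rw [pow_succ]; group
      rw [e]; exact S.P.mul_mem (S.conj_pos a ha) (S.P.pow_mem S.delta_mem k)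
    obtain ⟨l, hl, hlp⟩ := Submonoid.exists_list_of_mem_closure hm
    have hdm' : S.Δ⁻¹ * m ∈ S.M := by
      rw [← hlp] at hdm ⊢
      exact S.simple_div_mem l hl S.Δ S.delta_simple hdm
    have hstep : (S.Δ⁻¹ * a * S.Δ) * S.Δ ^ k = S.Δ⁻¹ * m := by
      rw [← he, pow_succ]; group
    have hτ := ih _ (S.conj_pos a ha) _ hdm' hstep
    have e : a = S.Δ * (S.Δ⁻¹ * a * S.Δ) * S.Δ⁻¹ := by group
    rw [e]; exact S.tauInv_M hτ

lemma P_le_M {a : G} (ha : a ∈ S.P) : a ∈ S.M := by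
  obtain ⟨m, hm, n, he⟩ := S.exists_rep a
  rcases le_or_gt 0 n with hn | hn
  · refine S.aux_P_le_M n.toNat a ha m hm ?_
    rw [he, ← zpow_natCast, Int.toNat_of_nonneg hn]
    group
  · have e : a = m * S.Δ ^ (-n).toNat := by
      rw [he, ← zpow_natCast, Int.toNat_of_nonneg (by omega : (0:ℤ) ≤ -n)]
      group
    rw [e]
    exact S.M.mul_mem hm (S.M.pow_mem (S.simple_mem_M S.delta_simple) _)

lemma zconj (n : ℤ) {a : G} (ha : a ∈ S.P) : S.Δ ^ n * a * (S.Δ ^ n)⁻¹ ∈ S.P :=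
  S.M_le_P (S.zconj_M n (S.P_le_M ha))

lemma zpow_delta_mem {n : ℤ} (hn : 0 ≤ n) : S.Δ ^ n ∈ S.P := by
  rw [← Int.toNat_of_nonneg hn, zpow_natCast]
  exact S.P.pow_mem S.delta_mem _

lemma inf_inv_eq_neg_sup (y : G) : S.inf y⁻¹ = -S.sup y := by
  apply le_antisymm
  · have h1 : (S.Δ ^ S.inf y⁻¹)⁻¹ * y⁻¹ ∈ S.P := S.inf_le y⁻¹
    have h2 := S.zconj (S.inf y⁻¹) h1
    have e : S.Δ ^ S.inf y⁻¹ * ((S.Δ ^ S.inf y⁻¹)⁻¹ * y⁻¹) * (S.Δ ^ S.inf y⁻¹)⁻¹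
        = y⁻¹ * S.Δ ^ (-S.inf y⁻¹) := by group
    rw [e] at h2
    have h3 := S.sup_min y _ h2
    omega
  · have h1 : y⁻¹ * S.Δ ^ S.sup y ∈ S.P := S.le_sup y
    have h2 := S.zconj (S.sup y) h1
    have e : S.Δ ^ S.sup y * (y⁻¹ * S.Δ ^ S.sup y) * (S.Δ ^ S.sup y)⁻¹
        = (S.Δ ^ (-S.sup y))⁻¹ * y⁻¹ := by group
    rw [e] at h2
    exact S.inf_max y⁻¹ _ h2

lemma iota_le_left (y : G) : (S.iota y)⁻¹ * (y * S.Δ ^ (-S.inf y)) ∈ S.P :=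
  S.wedge_le_left _ _

lemma iota_le_right (y : G) : (S.iota y)⁻¹ * S.Δ ∈ S.P :=
  S.wedge_le_right _ _

lemma iota_mono (x α γ : G)
    (hinf : S.inf (γ⁻¹ * x * γ) ≤ S.inf (α⁻¹ * x * α))
    (hc : α⁻¹ * γ ∈ S.P) :
    (S.iota (α⁻¹ * x * α))⁻¹ * (α⁻¹ * γ) * S.iota (γ⁻¹ * x * γ) ∈ S.P := by
  have hA := S.iota_le_left (α⁻¹ * x * α)
  have hB := S.zconj (S.inf (α⁻¹ * x * α)) hc
  have hC : S.Δ ^ (S.inf (α⁻¹ * x * α) - S.inf (γ⁻¹ * x * γ)) ∈ S.P :=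
    S.zpow_delta_mem (by omega)
  have sub1 : ((α⁻¹ * γ)⁻¹ * S.iota (α⁻¹ * x * α))⁻¹ *
      (γ⁻¹ * x * γ * S.Δ ^ (-S.inf (γ⁻¹ * x * γ))) ∈ S.P := by
    have e : ((α⁻¹ * γ)⁻¹ * S.iota (α⁻¹ * x * α))⁻¹ *
        (γ⁻¹ * x * γ * S.Δ ^ (-S.inf (γ⁻¹ * x * γ)))
        = ((S.iota (α⁻¹ * x * α))⁻¹ * (α⁻¹ * x * α * S.Δ ^ (-S.inf (α⁻¹ * x * α))))
          * ((S.Δ ^ S.inf (α⁻¹ * x * α) * (α⁻¹ * γ) * (S.Δ ^ S.inf (α⁻¹ * x * α))⁻¹)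
            * S.Δ ^ (S.inf (α⁻¹ * x * α) - S.inf (γ⁻¹ * x * γ))) := by group
    rw [e]; exact S.P.mul_mem hA (S.P.mul_mem hB hC)
  have sub2 : ((α⁻¹ * γ)⁻¹ * S.iota (α⁻¹ * x * α))⁻¹ * S.Δ ∈ S.P := by
    have e : ((α⁻¹ * γ)⁻¹ * S.iota (α⁻¹ * x * α))⁻¹ * S.Δ
        = ((S.iota (α⁻¹ * x * α))⁻¹ * S.Δ) * (S.Δ⁻¹ * (α⁻¹ * γ) * S.Δ) := by group
    rw [e]; exact S.P.mul_mem (S.iota_le_right _) (S.conj_pos _ hc)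
  have key := S.le_wedge (γ⁻¹ * x * γ * S.Δ ^ (-S.inf (γ⁻¹ * x * γ))) S.Δ _ sub1 sub2
  have e2 : ((α⁻¹ * γ)⁻¹ * S.iota (α⁻¹ * x * α))⁻¹ *
      S.wedge (γ⁻¹ * x * γ * S.Δ ^ (-S.inf (γ⁻¹ * x * γ))) S.Δ
      = (S.iota (α⁻¹ * x * α))⁻¹ * (α⁻¹ * γ) * S.iota (γ⁻¹ * x * γ) := by
    unfold iota; group
  rw [e2] at key; exact key

end Garside

open Garside in
theorem statement9 {G : Type*} [Group G] (S : Garside G) (x α γ : G)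
    (h1 : S.inf (γ⁻¹ * x * γ) ≤ S.inf (α⁻¹ * x * α))
    (h2 : S.sup (α⁻¹ * x * α) ≤ S.sup (γ⁻¹ * x * γ))
    (h : S.le α γ) : S.le (S.transport x α) (S.transport x γ) := by
  have hinf2 : S.inf (γ⁻¹ * x⁻¹ * γ) ≤ S.inf (α⁻¹ * x⁻¹ * α) := by
    have e1 : γ⁻¹ * x⁻¹ * γ = (γ⁻¹ * x * γ)⁻¹ := by group
    have e2 : α⁻¹ * x⁻¹ * α = (α⁻¹ * x * α)⁻¹ := by group
    rw [e1, e2, S.inf_inv_eq_neg_sup (γ⁻¹ * x * γ), S.inf_inv_eq_neg_sup (α⁻¹ * x * α)]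
    omega
  have I1 := S.iota_mono x α γ h1 h
  have I2 := S.iota_mono x⁻¹ α γ hinf2 h
  show (S.transport x α)⁻¹ * S.transport x γ ∈ S.P
  unfold transport pp
  rw [show (α⁻¹ * x * α)⁻¹ = α⁻¹ * x⁻¹ * α by group,
      show (γ⁻¹ * x * γ)⁻¹ = γ⁻¹ * x⁻¹ * γ by group]
  have t1 : (S.wedge (S.iota (α⁻¹ * x * α)) (S.iota (α⁻¹ * x⁻¹ * α)))⁻¹ *
      S.iota (α⁻¹ * x * α) ∈ S.P := S.wedge_le_left _ _
  have t2 : (S.wedge (S.iota (α⁻¹ * x * α)) (S.iota (α⁻¹ * x⁻¹ * α)))⁻¹ *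
      S.iota (α⁻¹ * x⁻¹ * α) ∈ S.P := S.wedge_le_right _ _
  have sub1 : (γ⁻¹ * α * S.wedge (S.iota (α⁻¹ * x * α)) (S.iota (α⁻¹ * x⁻¹ * α)))⁻¹ *
      S.iota (γ⁻¹ * x * γ) ∈ S.P := by
    have e : (γ⁻¹ * α * S.wedge (S.iota (α⁻¹ * x * α)) (S.iota (α⁻¹ * x⁻¹ * α)))⁻¹ *
        S.iota (γ⁻¹ * x * γ)
        = ((S.wedge (S.iota (α⁻¹ * x * α)) (S.iota (α⁻¹ * x⁻¹ * α)))⁻¹ *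
            S.iota (α⁻¹ * x * α)) *
          ((S.iota (α⁻¹ * x * α))⁻¹ * (α⁻¹ * γ) * S.iota (γ⁻¹ * x * γ)) := by group
    rw [e]; exact S.P.mul_mem t1 I1
  have sub2 : (γ⁻¹ * α * S.wedge (S.iota (α⁻¹ * x * α)) (S.iota (α⁻¹ * x⁻¹ * α)))⁻¹ *
      S.iota (γ⁻¹ * x⁻¹ * γ) ∈ S.P := by
    have e : (γ⁻¹ * α * S.wedge (S.iota (α⁻¹ * x * α)) (S.iota (α⁻¹ * x⁻¹ * α)))⁻¹ *
        S.iota (γ⁻¹ * x⁻¹ * γ)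
        = ((S.wedge (S.iota (α⁻¹ * x * α)) (S.iota (α⁻¹ * x⁻¹ * α)))⁻¹ *
            S.iota (α⁻¹ * x⁻¹ * α)) *
          ((S.iota (α⁻¹ * x⁻¹ * α))⁻¹ * (α⁻¹ * γ) * S.iota (γ⁻¹ * x⁻¹ * γ)) := by group
    rw [e]; exact S.P.mul_mem t2 I2
  have key := S.le_wedge (S.iota (γ⁻¹ * x * γ)) (S.iota (γ⁻¹ * x⁻¹ * γ))
    (γ⁻¹ * α * S.wedge (S.iota (α⁻¹ * x * α)) (S.iota (α⁻¹ * x⁻¹ * α))) sub1 sub2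
  have e : (γ⁻¹ * α * S.wedge (S.iota (α⁻¹ * x * α)) (S.iota (α⁻¹ * x⁻¹ * α)))⁻¹ *
      S.wedge (S.iota (γ⁻¹ * x * γ)) (S.iota (γ⁻¹ * x⁻¹ * γ))
      = ((S.wedge (S.iota x) (S.iota x⁻¹))⁻¹ * α *
          S.wedge (S.iota (α⁻¹ * x * α)) (S.iota (α⁻¹ * x⁻¹ * α)))⁻¹ *
        ((S.wedge (S.iota x) (S.iota x⁻¹))⁻¹ * γ *
          S.wedge (S.iota (γ⁻¹ * x * γ)) (S.iota (γ⁻¹ * x⁻¹ * γ))) := by group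
  rw [e] at key; exact key

end GarsidePaper
end

section
/- Let G be a Garside group of finite type and x ∈ G. If x^α ∈ SSS(x) and x^β ∈ SSS(x) for elements α, β ∈ G, then x^{α∨β} ∈ SSS(x). -/
namespace GarsidePaper

namespace Garside

variable {G : Type*} [Group G] (S : Garside G)

lemma conj_pow_mem (n : ℕ) {a : G} (ha : a ∈ S.P) :
    (S.Δ ^ n)⁻¹ * a * S.Δ ^ n ∈ S.P := by
  induction n with
  | zero => simpa using ha
  | succ n ih =>
      have h := S.conj_pos _ ih
      have e : S.Δ⁻¹ * ((S.Δ ^ n)⁻¹ * a * S.Δ ^ n) * S.Δ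
          = (S.Δ ^ (n + 1))⁻¹ * a * S.Δ ^ (n + 1) := by group
      rwa [e] at h

lemma exists_central : ∃ N : ℕ, 0 < N ∧ ∀ g : G, g * S.Δ ^ N = S.Δ ^ N * g := by
  classical
  set T : Set G := {a : G | a ∈ S.P ∧ a⁻¹ * S.Δ ∈ S.P} with hT
  have hmap : ∀ s ∈ T, S.Δ⁻¹ * s * S.Δ ∈ T := by
    rintro s ⟨h1, h2⟩
    refine ⟨S.conj_pos s h1, ?_⟩
    have h := S.conj_pos _ h2
    have e : S.Δ⁻¹ * (s⁻¹ * S.Δ) * S.Δ = (S.Δ⁻¹ * s * S.Δ)⁻¹ * S.Δ := by group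
    rwa [e] at h
  haveI : Finite T := S.simples_finite
  let f : T → T := fun s => ⟨S.Δ⁻¹ * (s : G) * S.Δ, hmap s s.2⟩
  have hinj : Function.Injective f := by
    intro a b hab
    have h : S.Δ⁻¹ * (a : G) * S.Δ = S.Δ⁻¹ * (b : G) * S.Δ := congrArg Subtype.val hab
    have h2 : (a : G) = b := by
      have ha' : (a : G) = S.Δ * (S.Δ⁻¹ * (a : G) * S.Δ) * S.Δ⁻¹ := by group
      rw [ha', h]; group
    exact Subtype.ext h2
  let e : T ≃ T := Equiv.ofBijective f (Finite.injective_iff_bijective.mp hinj)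
  have hfo : IsOfFinOrder e := isOfFinOrder_of_finite e
  refine ⟨orderOf e, hfo.orderOf_pos, ?_⟩
  have hpow : ∀ (n : ℕ) (s : T), ((e ^ n) s : G) = (S.Δ ^ n)⁻¹ * (s : G) * S.Δ ^ n := by
    intro n
    induction n with
    | zero => intro s; simp
    | succ n ih =>
        intro s
        have h1 : (e ^ (n + 1)) s = (e ^ n) (e s) := by
          rw [pow_succ]; rfl
        rw [h1, ih]
        show (S.Δ ^ n)⁻¹ * (S.Δ⁻¹ * (s : G) * S.Δ) * S.Δ ^ n
            = (S.Δ ^ (n + 1))⁻¹ * (s : G) * S.Δ ^ (n + 1)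
        group
  have hfix : ∀ s ∈ T, (S.Δ ^ orderOf e)⁻¹ * s * S.Δ ^ orderOf e = s := by
    intro s hs
    have h0 := Equiv.ext_iff.mp (pow_orderOf_eq_one e) ⟨s, hs⟩
    have h : ((e ^ orderOf e) (⟨s, hs⟩ : T) : G) = s := by rw [h0]; rfl
    rw [hpow (orderOf e) ⟨s, hs⟩] at h
    exact h
  have hcl : Subgroup.closure T ≤ Subgroup.centralizer {S.Δ ^ orderOf e} := by
    rw [Subgroup.closure_le]
    intro s hs
    rw [SetLike.mem_coe, Subgroup.mem_centralizer_iff]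
    intro g hg
    rw [Set.mem_singleton_iff] at hg
    subst hg
    have h := hfix s hs
    calc S.Δ ^ orderOf e * s
        = S.Δ ^ orderOf e * ((S.Δ ^ orderOf e)⁻¹ * s * S.Δ ^ orderOf e) := by rw [h]
      _ = s * S.Δ ^ orderOf e := by group
  intro g
  have hg : g ∈ Subgroup.centralizer {S.Δ ^ orderOf e} := by
    apply hcl
    rw [S.simples_generate]
    trivial
  have := (Subgroup.mem_centralizer_iff.mp hg) (S.Δ ^ orderOf e) rfl
  exact this.symm

lemma conj_neg_mem {a : G} (ha : a ∈ S.P) : S.Δ * a * S.Δ⁻¹ ∈ S.P := by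
  obtain ⟨N, hN, hc⟩ := S.exists_central
  obtain ⟨m, rfl⟩ : ∃ m, N = m + 1 := ⟨N - 1, by omega⟩
  have e : S.Δ * a * S.Δ⁻¹ = (S.Δ ^ m)⁻¹ * a * S.Δ ^ m := by
    calc S.Δ * a * S.Δ⁻¹ = (S.Δ ^ m)⁻¹ * (S.Δ ^ (m + 1) * a) * S.Δ⁻¹ := by group
      _ = (S.Δ ^ m)⁻¹ * (a * S.Δ ^ (m + 1)) * S.Δ⁻¹ := by rw [hc a]
      _ = (S.Δ ^ m)⁻¹ * a * S.Δ ^ m := by group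
  rw [e]; exact S.conj_pow_mem m ha

lemma conj_zpow_mem (k : ℤ) {a : G} (ha : a ∈ S.P) :
    (S.Δ ^ k)⁻¹ * a * S.Δ ^ k ∈ S.P := by
  induction k using Int.induction_on with
  | zero => simpa using ha
  | succ n ih =>
      have h := S.conj_pos _ ih
      have e : S.Δ⁻¹ * ((S.Δ ^ (n : ℤ))⁻¹ * a * S.Δ ^ (n : ℤ)) * S.Δ
          = (S.Δ ^ ((n : ℤ) + 1))⁻¹ * a * S.Δ ^ ((n : ℤ) + 1) := by group
      rwa [e] at h
  | pred n ih =>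
      have h := S.conj_neg_mem ih
      have e : S.Δ * ((S.Δ ^ (-(n : ℤ)))⁻¹ * a * S.Δ ^ (-(n : ℤ))) * S.Δ⁻¹
          = (S.Δ ^ (-(n : ℤ) - 1))⁻¹ * a * S.Δ ^ (-(n : ℤ) - 1) := by group
      rwa [e] at h

lemma zpow_nonneg_mem {k : ℤ} (hk : 0 ≤ k) : S.Δ ^ k ∈ S.P := by
  obtain ⟨n, rfl⟩ := Int.eq_ofNat_of_zero_le hk
  rw [zpow_natCast]
  exact S.P.pow_mem S.delta_mem n

lemma le_trans'' {a b c : G} (h1 : a⁻¹ * b ∈ S.P) (h2 : b⁻¹ * c ∈ S.P) :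
    a⁻¹ * c ∈ S.P := by
  have h := S.P.mul_mem h1 h2
  rwa [show a⁻¹ * b * (b⁻¹ * c) = a⁻¹ * c by group] at h

end Garside

open Garside in
theorem statement13 {G : Type*} [Group G] (S : Garside G) (x α β : G)
    (hα : α⁻¹ * x * α ∈ S.SSS x) (hβ : β⁻¹ * x * β ∈ S.SSS x) :
    (S.vee α β)⁻¹ * x * S.vee α β ∈ S.SSS x := by
  obtain ⟨hc1, hi1, hs1⟩ := hα
  obtain ⟨hc2, hi2, hs2⟩ := hβ
  set γ := S.vee α β with hγdef
  set p := S.inf (α⁻¹ * x * α) with hpdef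
  set q := S.sup (α⁻¹ * x * α) with hqdef
  have hcγ : IsConj x (γ⁻¹ * x * γ) := by
    rw [isConj_iff]
    exact ⟨γ⁻¹, by group⟩
  -- inf part
  have hpβ : (S.Δ ^ p)⁻¹ * (β⁻¹ * x * β) ∈ S.P := by
    refine S.le_trans'' ?_ (S.inf_le (β⁻¹ * x * β))
    have hle : p ≤ S.inf (β⁻¹ * x * β) := hi2 _ hc1
    have e : (S.Δ ^ p)⁻¹ * S.Δ ^ (S.inf (β⁻¹ * x * β))
        = S.Δ ^ (S.inf (β⁻¹ * x * β) - p) := by group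
    rw [e]
    exact S.zpow_nonneg_mem (by omega)
  have hγα : α⁻¹ * (x * γ * S.Δ ^ (-p)) ∈ S.P := by
    have h := S.conj_zpow_mem (-p)
      (S.P.mul_mem (S.inf_le (α⁻¹ * x * α)) (S.le_vee_left α β))
    have e : (S.Δ ^ (-p))⁻¹ * ((S.Δ ^ p)⁻¹ * (α⁻¹ * x * α) * (α⁻¹ * S.vee α β)) * S.Δ ^ (-p)
        = α⁻¹ * (x * S.vee α β * S.Δ ^ (-p)) := by group
    rwa [e] at h
  have hγβ : β⁻¹ * (x * γ * S.Δ ^ (-p)) ∈ S.P := by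
    have h := S.conj_zpow_mem (-p)
      (S.P.mul_mem hpβ (S.le_vee_right α β))
    have e : (S.Δ ^ (-p))⁻¹ * ((S.Δ ^ p)⁻¹ * (β⁻¹ * x * β) * (β⁻¹ * S.vee α β)) * S.Δ ^ (-p)
        = β⁻¹ * (x * S.vee α β * S.Δ ^ (-p)) := by group
    rwa [e] at h
  have hinfγ : (S.Δ ^ p)⁻¹ * (γ⁻¹ * x * γ) ∈ S.P := by
    have h := S.conj_zpow_mem p (S.vee_le α β (x * γ * S.Δ ^ (-p)) hγα hγβ)
    have e : (S.Δ ^ p)⁻¹ * ((S.vee α β)⁻¹ * (x * S.vee α β * S.Δ ^ (-p))) * S.Δ ^ p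
        = (S.Δ ^ p)⁻¹ * ((S.vee α β)⁻¹ * x * S.vee α β) := by group
    rwa [e] at h
  -- sup part
  have hqβ : (β⁻¹ * x * β)⁻¹ * S.Δ ^ q ∈ S.P := by
    refine S.le_trans'' (S.le_sup (β⁻¹ * x * β)) ?_
    have hle : S.sup (β⁻¹ * x * β) ≤ q := hs2 _ hc1
    have e : (S.Δ ^ (S.sup (β⁻¹ * x * β)))⁻¹ * S.Δ ^ q
        = S.Δ ^ (q - S.sup (β⁻¹ * x * β)) := by group
    rw [e]
    exact S.zpow_nonneg_mem (by omega)
  have hsα : α⁻¹ * (x⁻¹ * γ * S.Δ ^ q) ∈ S.P := by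
    have h := S.P.mul_mem (S.le_sup (α⁻¹ * x * α))
      (S.conj_zpow_mem q (S.le_vee_left α β))
    have e : (α⁻¹ * x * α)⁻¹ * S.Δ ^ q * ((S.Δ ^ q)⁻¹ * (α⁻¹ * S.vee α β) * S.Δ ^ q)
        = α⁻¹ * (x⁻¹ * S.vee α β * S.Δ ^ q) := by group
    rwa [e] at h
  have hsβ : β⁻¹ * (x⁻¹ * γ * S.Δ ^ q) ∈ S.P := by
    have h := S.P.mul_mem hqβ (S.conj_zpow_mem q (S.le_vee_right α β))
    have e : (β⁻¹ * x * β)⁻¹ * S.Δ ^ q * ((S.Δ ^ q)⁻¹ * (β⁻¹ * S.vee α β) * S.Δ ^ q)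
        = β⁻¹ * (x⁻¹ * S.vee α β * S.Δ ^ q) := by group
    rwa [e] at h
  have hsupγ : (γ⁻¹ * x * γ)⁻¹ * S.Δ ^ q ∈ S.P := by
    have h := S.vee_le α β (x⁻¹ * γ * S.Δ ^ q) hsα hsβ
    have e : (S.vee α β)⁻¹ * (x⁻¹ * S.vee α β * S.Δ ^ q)
        = ((S.vee α β)⁻¹ * x * S.vee α β)⁻¹ * S.Δ ^ q := by group
    rwa [e] at h
  refine ⟨hcγ, ?_, ?_⟩
  · intro z hz
    calc S.inf z ≤ p := hi1 z hz
      _ ≤ S.inf (γ⁻¹ * x * γ) := S.inf_max _ p hinfγ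
  · intro z hz
    calc S.sup (γ⁻¹ * x * γ) ≤ q := S.sup_min _ q hsupγ
      _ ≤ S.sup z := hs1 z hz


end GarsidePaper
end
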